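/- arXiv:2103.08683 — 2 statements merged into one kernel-verified Lean document; each statement's English description precedes it below -/
import Mathlib

section
/- Let 0 < ε < 1, let G = (V, E) be a d-regular ε-spectral expander on 2n vertices, and let S ⊆ V be nonempty. Then there exists a vertex v ∈ S whose degree in the induced subgraph G[S] is at least ⌈d(|S|/(2n) − ε)⌉. -/
open Matrix Finset

/-- The normalized adjacency matrix `Ã = A / d` of a (`d`-regular) graph. -/
noncomputable def normAdj {N : ℕ} (G : SimpleGraph (Fin N)) [DecidableRel G.Adj] (d : ℕ) :
    Matrix (Fin N) (Fin N) ℝ :=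
  (d : ℝ)⁻¹ • (SimpleGraph.adjMatrix ℝ G)

/-- `σ₂(Ã) = max(λ₂, |λ_N|)`, expressed via the Rayleigh quotient characterization:
for a `d`-regular graph the all-ones vector is a top eigenvector (with eigenvalue `λ₁ = 1`),
so `max(λ₂, |λ_N|)` is the supremum of `|xᵀ Ã x|` over unit vectors `x` orthogonal to
the all-ones vector. -/
noncomputable def sigma2 {N : ℕ} (G : SimpleGraph (Fin N)) [DecidableRel G.Adj] (d : ℕ) : ℝ :=
  sSup {r : ℝ | ∃ x : Fin N → ℝ, x ⬝ᵥ x = 1 ∧ (∑ i, x i) = 0 ∧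
    r = |x ⬝ᵥ (normAdj G d).mulVec x|}

lemma aux_rowsum {N : ℕ} (G : SimpleGraph (Fin N)) [DecidableRel G.Adj] {d : ℕ}
    (hreg : G.IsRegularOfDegree d) (i : Fin N) :
    ∑ j, (SimpleGraph.adjMatrix ℝ G) i j = d := by
  simp only [SimpleGraph.adjMatrix_apply, Finset.sum_boole]
  rw [← SimpleGraph.neighborFinset_eq_filter, SimpleGraph.card_neighborFinset_eq_degree, hreg i]

lemma aux_bdd {N : ℕ} (G : SimpleGraph (Fin N)) [DecidableRel G.Adj] {d : ℕ} (hd : 0 < d)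
    (hreg : G.IsRegularOfDegree d) (x : Fin N → ℝ) (hx : x ⬝ᵥ x = 1) :
    |x ⬝ᵥ ((d : ℝ)⁻¹ • (SimpleGraph.adjMatrix ℝ G)).mulVec x| ≤ N := by
  set M := (d : ℝ)⁻¹ • (SimpleGraph.adjMatrix ℝ G) with hM
  have hxi : ∀ i, |x i| ≤ 1 := by
    intro i
    rw [abs_le_one_iff_mul_self_le_one]
    calc x i * x i ≤ ∑ j, x j * x j :=
          Finset.single_le_sum (f := fun j => x j * x j) (fun j _ => mul_self_nonneg _) (mem_univ i)
      _ = 1 := hx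
  have hA : ∀ i j, (0:ℝ) ≤ M i j := by
    intro i j; simp only [hM, Matrix.smul_apply, SimpleGraph.adjMatrix_apply, smul_eq_mul]
    positivity
  have hrow : ∀ i, ∑ j, M i j = 1 := by
    intro i
    simp only [hM, Matrix.smul_apply, smul_eq_mul, ← Finset.mul_sum]
    rw [aux_rowsum G hreg i]
    field_simp
  calc |x ⬝ᵥ M.mulVec x| ≤ ∑ i, |x i * (M.mulVec x) i| := Finset.abs_sum_le_sum_abs _ _
    _ ≤ ∑ i : Fin N, (1:ℝ) := by
        refine Finset.sum_le_sum fun i _ => ?_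
        rw [abs_mul]
        calc |x i| * |(M.mulVec x) i| ≤ 1 * |∑ j, M i j * x j| := by
              apply mul_le_mul_of_nonneg_right (hxi i) (abs_nonneg _) |>.trans
              rw [Matrix.mulVec, dotProduct]
          _ ≤ ∑ j, M i j := by
              rw [one_mul]
              calc |∑ j, M i j * x j| ≤ ∑ j, |M i j * x j| := Finset.abs_sum_le_sum_abs _ _
                _ ≤ ∑ j, M i j := by
                    refine Finset.sum_le_sum fun j _ => ?_
                    rw [abs_mul, abs_of_nonneg (hA i j)]
                    nlinarith [hxi j, hA i j, abs_nonneg (x j)]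
          _ = 1 := hrow i
    _ = N := by simp

lemma aux_expand {N : ℕ} (G : SimpleGraph (Fin N)) [DecidableRel G.Adj] {d : ℕ}
    (hreg : G.IsRegularOfDegree d) (S : Finset (Fin N)) (α : ℝ) :
    (fun i => (if i ∈ S then (1:ℝ) else 0) - α) ⬝ᵥ
      (SimpleGraph.adjMatrix ℝ G).mulVec (fun i => (if i ∈ S then (1:ℝ) else 0) - α) =
    (fun i => (if i ∈ S then (1:ℝ) else 0)) ⬝ᵥ
      (SimpleGraph.adjMatrix ℝ G).mulVec (fun i => (if i ∈ S then (1:ℝ) else 0))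
      - 2 * d * α * S.card + N * d * α^2 := by
  set A := SimpleGraph.adjMatrix ℝ G with hA
  set χ : Fin N → ℝ := fun i => (if i ∈ S then (1:ℝ) else 0) with hχ
  set c : Fin N → ℝ := fun _ => α with hc
  have h1 : (fun i => χ i - α) = χ - c := rfl
  have hAc : A.mulVec c = fun _ => d * α := by
    funext i
    rw [SimpleGraph.adjMatrix_mulVec_apply]
    simp [hc, hreg i]
  have hcA : Matrix.vecMul c A = fun _ => d * α := by
    funext i
    rw [SimpleGraph.adjMatrix_vecMul_apply]
    simp [hc, hreg i]
  have e1 : χ ⬝ᵥ (fun _ => (d:ℝ)*α) = S.card * (d*α) := by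
    simp [dotProduct, hχ, ite_mul, Finset.sum_ite_mem]
  have e2 : (fun _ => (d:ℝ)*α) ⬝ᵥ χ = S.card * (d*α) := by
    simp [dotProduct, hχ, mul_ite, Finset.sum_ite_mem, mul_comm]
  have e3 : c ⬝ᵥ (fun _ => (d:ℝ)*α) = N * (α * (d*α)) := by
    simp [dotProduct, hc]
  rw [h1, Matrix.mulVec_sub, sub_dotProduct, dotProduct_sub,
    dotProduct_sub, hAc, Matrix.dotProduct_mulVec c A χ, hcA, e1, e2, e3]
  ring

lemma aux_chiAchi {N : ℕ} (G : SimpleGraph (Fin N)) [DecidableRel G.Adj]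
    (S : Finset (Fin N)) :
    (fun i => (if i ∈ S then (1:ℝ) else 0)) ⬝ᵥ
      (SimpleGraph.adjMatrix ℝ G).mulVec (fun i => (if i ∈ S then (1:ℝ) else 0)) =
    ∑ v ∈ S, ((S.filter (fun u => G.Adj v u)).card : ℝ) := by
  have key : ∀ i, ((SimpleGraph.adjMatrix ℝ G).mulVec (fun i => (if i ∈ S then (1:ℝ) else 0))) i
      = ((S.filter (fun u => G.Adj i u)).card : ℝ) := by
    intro i
    rw [SimpleGraph.adjMatrix_mulVec_apply, Finset.sum_boole]
    congr 2
    ext u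
    simp [SimpleGraph.mem_neighborFinset, and_comm]
  simp only [dotProduct, key, ite_mul, one_mul, zero_mul]
  rw [Finset.sum_ite_mem, Finset.univ_inter]

lemma aux_normsq {N : ℕ} (S : Finset (Fin N)) (α : ℝ) (hα : (N:ℝ) * α = S.card) :
    (fun i => (if i ∈ S then (1:ℝ) else 0) - α) ⬝ᵥ (fun i => (if i ∈ S then (1:ℝ) else 0) - α)
      = S.card - S.card * α := by
  simp only [dotProduct]
  have : ∀ i : Fin N, ((if i ∈ S then (1:ℝ) else 0) - α) * ((if i ∈ S then (1:ℝ) else 0) - α)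
      = (if i ∈ S then (1:ℝ) else 0) - 2 * α * (if i ∈ S then (1:ℝ) else 0) + α^2 := by
    intro i; by_cases h : i ∈ S <;> simp [h] <;> ring
  simp only [this, Finset.sum_add_distrib, Finset.sum_sub_distrib, ← Finset.mul_sum]
  rw [Finset.sum_ite_mem, Finset.univ_inter, Finset.sum_const, Finset.sum_const]
  simp only [nsmul_eq_mul, mul_one, Finset.card_univ, Fintype.card_fin]
  have h2 : (N:ℝ) * α^2 = S.card * α := by rw [pow_two, ← mul_assoc, hα]
  linarith

lemma aux_sumx {N : ℕ} (S : Finset (Fin N)) (α : ℝ) (hα : (N:ℝ) * α = S.card) :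
    ∑ i, ((if i ∈ S then (1:ℝ) else 0) - α) = 0 := by
  rw [Finset.sum_sub_distrib, Finset.sum_ite_mem, Finset.univ_inter, Finset.sum_const,
    Finset.sum_const]
  simp only [smul_eq_mul, mul_one, Finset.card_univ, Fintype.card_fin, nsmul_eq_mul]
  linarith [hα]

/-- In a `d`-regular `ε`-spectral expander on `2n` vertices, every nonempty `S ⊆ V`
contains a vertex whose degree in the induced subgraph `G[S]` (i.e. its number of
neighbors inside `S`) is at least `⌈d(|S|/(2n) − ε)⌉`. -/
theorem expander_induced_min_degree (n d : ℕ)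
    (ε : ℝ) (hε0 : 0 < ε) (hε1 : ε < 1)
    (G : SimpleGraph (Fin (2 * n))) [DecidableRel G.Adj]
    (hreg : G.IsRegularOfDegree d) (hexp : sigma2 G d ≤ ε)
    (S : Finset (Fin (2 * n))) (hS : S.Nonempty) :
    ∃ v ∈ S, ⌈(d : ℝ) * ((S.card : ℝ) / (2 * n) - ε)⌉ ≤
      ((S.filter (fun u => G.Adj v u)).card : ℤ) := by
  obtain ⟨v0, hv0⟩ := hS
  have hN : 0 < 2 * n := Fin.pos v0
  by_cases hd : d = 0
  · refine ⟨v0, hv0, ?_⟩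
    subst hd
    simp only [Nat.cast_zero, zero_mul, Int.ceil_zero]
    positivity
  have hd' : 0 < d := Nat.pos_of_ne_zero hd
  have hdR : (0:ℝ) < d := by exact_mod_cast hd'
  have h2n : (0:ℝ) < 2 * (n:ℝ) := by exact_mod_cast hN
  by_cases hSu : S = univ
  · refine ⟨v0, hv0, ?_⟩
    have hfv : (S.filter (fun u => G.Adj v0 u)).card = d := by
      subst hSu
      rw [show (univ.filter (fun u => G.Adj v0 u)) = G.neighborFinset v0 by
        ext u; simp [SimpleGraph.mem_neighborFinset]]
      rw [SimpleGraph.card_neighborFinset_eq_degree, hreg v0]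
    rw [hfv, Int.ceil_le]
    have hcard : (S.card : ℝ) = 2 * n := by
      subst hSu; rw [Finset.card_univ, Fintype.card_fin]; push_cast; ring
    rw [hcard, div_self (ne_of_gt h2n)]
    push_cast
    nlinarith
  -- main case
  have hs0 : (0:ℝ) < (S.card : ℝ) := by
    exact_mod_cast Finset.card_pos.mpr ⟨v0, hv0⟩
  have hsN : (S.card : ℝ) < ((2 * n : ℕ) : ℝ) := by
    have : S.card < (univ : Finset (Fin (2*n))).card :=
      Finset.card_lt_card ((Finset.subset_univ S).ssubset_of_ne hSu)
    rw [Finset.card_univ, Fintype.card_fin] at this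
    exact_mod_cast this
  have hNr0 : (0:ℝ) < ((2 * n : ℕ) : ℝ) := by exact_mod_cast hN
  set α : ℝ := (S.card : ℝ) / ((2 * n : ℕ) : ℝ) with hαdef
  have hα : ((2 * n : ℕ) : ℝ) * α = (S.card : ℝ) := by
    rw [hαdef]; field_simp
  have hα0 : 0 < α := div_pos hs0 hNr0
  have hα1 : α < 1 := (div_lt_one hNr0).mpr hsN
  set x : Fin (2*n) → ℝ := fun i => (if i ∈ S then (1:ℝ) else 0) - α with hxdef
  set q : ℝ := (S.card : ℝ) - (S.card : ℝ) * α with hqdef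
  have hq : x ⬝ᵥ x = q := aux_normsq S α hα
  have hq0 : 0 < q := by rw [hqdef]; nlinarith
  have hsum : ∑ i, x i = 0 := aux_sumx S α hα
  -- spectral bound
  have hnorm : |x ⬝ᵥ (normAdj G d).mulVec x| ≤ ε * q := by
    set y : Fin (2*n) → ℝ := (Real.sqrt q)⁻¹ • x with hydef
    have hsq : 0 < Real.sqrt q := Real.sqrt_pos.mpr hq0
    have hsqq : Real.sqrt q * Real.sqrt q = q := Real.mul_self_sqrt hq0.le
    have hyy : y ⬝ᵥ y = 1 := by
      rw [hydef, smul_dotProduct, dotProduct_smul, hq, smul_eq_mul, smul_eq_mul]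
      rw [← hsqq]; field_simp
      rw [Real.sqrt_sq hsq.le]
    have hysum : ∑ i, y i = 0 := by
      simp only [hydef, Pi.smul_apply, smul_eq_mul, ← Finset.mul_sum, hsum, mul_zero]
    have hyAy : y ⬝ᵥ (normAdj G d).mulVec y = q⁻¹ * (x ⬝ᵥ (normAdj G d).mulVec x) := by
      rw [hydef, Matrix.mulVec_smul, smul_dotProduct, dotProduct_smul,
        smul_eq_mul, smul_eq_mul]
      rw [← mul_assoc, ← mul_inv, hsqq]
    have hmem : |y ⬝ᵥ (normAdj G d).mulVec y| ∈
        {r : ℝ | ∃ z : Fin (2*n) → ℝ, z ⬝ᵥ z = 1 ∧ (∑ i, z i) = 0 ∧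
          r = |z ⬝ᵥ (normAdj G d).mulVec z|} := ⟨y, hyy, hysum, rfl⟩
    have hbdd : BddAbove {r : ℝ | ∃ z : Fin (2*n) → ℝ, z ⬝ᵥ z = 1 ∧ (∑ i, z i) = 0 ∧
        r = |z ⬝ᵥ (normAdj G d).mulVec z|} := by
      refine ⟨((2*n : ℕ) : ℝ), fun r hr => ?_⟩
      obtain ⟨z, hz1, _, hz3⟩ := hr
      rw [hz3]
      exact aux_bdd G hd' hreg z hz1
    have hle : |y ⬝ᵥ (normAdj G d).mulVec y| ≤ ε := (le_csSup hbdd hmem).trans hexp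
    rw [hyAy, abs_mul, abs_of_nonneg (inv_nonneg.mpr hq0.le)] at hle
    calc |x ⬝ᵥ (normAdj G d).mulVec x| = q * (q⁻¹ * |x ⬝ᵥ (normAdj G d).mulVec x|) := by
          field_simp
      _ ≤ q * ε := mul_le_mul_of_nonneg_left hle hq0.le
      _ = ε * q := mul_comm _ _
  have hxAx : |x ⬝ᵥ (SimpleGraph.adjMatrix ℝ G).mulVec x| ≤ ε * d * q := by
    have heq : x ⬝ᵥ (normAdj G d).mulVec x
        = (d:ℝ)⁻¹ * (x ⬝ᵥ (SimpleGraph.adjMatrix ℝ G).mulVec x) := by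
      rw [normAdj, Matrix.smul_mulVec, dotProduct_smul, smul_eq_mul]
    rw [heq, abs_mul, abs_of_nonneg (inv_nonneg.mpr (Nat.cast_nonneg d))] at hnorm
    calc |x ⬝ᵥ (SimpleGraph.adjMatrix ℝ G).mulVec x|
        = (d:ℝ) * ((d:ℝ)⁻¹ * |x ⬝ᵥ (SimpleGraph.adjMatrix ℝ G).mulVec x|) := by
          field_simp
      _ ≤ (d:ℝ) * (ε * q) := mul_le_mul_of_nonneg_left hnorm hdR.le
      _ = ε * d * q := by ring
  -- combinatorial identity
  have h3 : x ⬝ᵥ (SimpleGraph.adjMatrix ℝ G).mulVec x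
      = (∑ w ∈ S, ((S.filter (fun u => G.Adj w u)).card : ℝ))
        - 2 * d * α * (S.card : ℝ) + ((2*n : ℕ) : ℝ) * d * α^2 := by
    have h1 := aux_expand G hreg S α
    rw [aux_chiAchi G S] at h1
    exact h1
  have h4 : -(ε * d * q) ≤ x ⬝ᵥ (SimpleGraph.adjMatrix ℝ G).mulVec x :=
    neg_le_of_abs_le hxAx
  have h5 : ((2*n : ℕ) : ℝ) * (d:ℝ) * α^2 = d * (S.card : ℝ) * α := by
    rw [← hα]; ring
  have hq_le_s : q ≤ (S.card : ℝ) := by rw [hqdef]; nlinarith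
  have h7 : ε * (d:ℝ) * q ≤ ε * d * (S.card : ℝ) := by
    have : (0:ℝ) ≤ ε * d := by positivity
    nlinarith
  clear_value x α q
  have hkey : (d:ℝ) * (S.card : ℝ) * (α - ε)
      ≤ ∑ w ∈ S, ((S.filter (fun u => G.Adj w u)).card : ℝ) := by
    linarith [h3, h4, h5, h7]
  -- maximum vertex
  obtain ⟨v, hvS, hmax⟩ :=
    Finset.exists_max_image S (fun w => (S.filter (fun u => G.Adj w u)).card) ⟨v0, hv0⟩
  refine ⟨v, hvS, ?_⟩
  have hDle : (∑ w ∈ S, ((S.filter (fun u => G.Adj w u)).card : ℝ))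
      ≤ (S.card : ℝ) * ((S.filter (fun u => G.Adj v u)).card : ℝ) := by
    calc (∑ w ∈ S, ((S.filter (fun u => G.Adj w u)).card : ℝ))
        ≤ ∑ _w ∈ S, (((S.filter (fun u => G.Adj v u)).card : ℝ)) :=
          Finset.sum_le_sum fun u hu => Nat.cast_le.mpr (hmax u hu)
      _ = _ := by rw [Finset.sum_const, nsmul_eq_mul]
  have hfinal : (d:ℝ) * (α - ε) ≤ ((S.filter (fun u => G.Adj v u)).card : ℝ) := by
    have h' : (S.card : ℝ) * ((d:ℝ) * (α - ε))
        ≤ (S.card : ℝ) * ((S.filter (fun u => G.Adj v u)).card : ℝ) := by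
      calc (S.card : ℝ) * ((d:ℝ) * (α - ε))
          = (d:ℝ) * (S.card : ℝ) * (α - ε) := by ring
        _ ≤ _ := hkey.trans hDle
    exact le_of_mul_le_mul_left h' hs0
  rw [Int.ceil_le]
  have hcast : ((((S.filter (fun u => G.Adj v u)).card : ℤ)) : ℝ)
      = ((S.filter (fun u => G.Adj v u)).card : ℝ) := by push_cast; rfl
  rw [hcast]
  have hα2 : (S.card : ℝ) / (2 * (n:ℝ)) = α := by
    rw [hαdef]; congr 1; push_cast; ring
  rw [hα2]
  exact hfinal
end

section
/- Let 0 < ε < 1/2, let G be a d-regular ε-spectral expander on 2n vertices, and suppose k = (1−ε)n is a nonnegative integer. Then m(k) ≥ (d/e)^{(1−ε)n} · e^{−2εn}. -/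
open Matrix Finset

/-- A matching in `G`: a set of edges of `G` that are pairwise disjoint. -/
def IsMatchingSet {N : ℕ} (G : SimpleGraph (Fin N)) (M : Finset (Sym2 (Fin N))) : Prop :=
  (↑M : Set (Sym2 (Fin N))) ⊆ G.edgeSet ∧
    ∀ e ∈ M, ∀ f ∈ M, e ≠ f → ∀ v : Fin N, v ∈ e → v ∉ f

/-- `m(k)`: the number of `k`-matchings of `G`. -/
noncomputable def numMatchings {N : ℕ} (G : SimpleGraph (Fin N)) (k : ℕ) : ℕ :=
  Nat.card {M : Finset (Sym2 (Fin N)) // IsMatchingSet G M ∧ M.card = k}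

section Auxiliary

/-- Edges of `G` all of whose endpoints lie in `S`. -/
def insideEdges {N : ℕ} (G : SimpleGraph (Fin N)) [DecidableRel G.Adj]
    (S : Finset (Fin N)) : Finset (Sym2 (Fin N)) :=
  G.edgeFinset.filter (fun e => ∀ v ∈ e, v ∈ S)

lemma row_ite_sq {N : ℕ} (G : SimpleGraph (Fin N)) [DecidableRel G.Adj] {d : ℕ}
    (hreg : G.IsRegularOfDegree d) (f : Fin N → ℝ) :
    ∑ i, ∑ j, (if G.Adj i j then f i else 0) = d * ∑ i, f i := by
  rw [Finset.mul_sum]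
  refine Finset.sum_congr rfl fun i _ => ?_
  rw [← Finset.sum_filter, Finset.sum_const]
  simp only [nsmul_eq_mul]
  have : (Finset.univ.filter (fun j => G.Adj i j)).card = d := by
    rw [← SimpleGraph.neighborFinset_eq_filter]; exact hreg i
  rw [this]

lemma col_ite_sq {N : ℕ} (G : SimpleGraph (Fin N)) [DecidableRel G.Adj] {d : ℕ}
    (hreg : G.IsRegularOfDegree d) (f : Fin N → ℝ) :
    ∑ i, ∑ j, (if G.Adj i j then f j else 0) = d * ∑ j, f j := by
  rw [Finset.sum_comm, ← row_ite_sq G hreg f]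
  refine Finset.sum_congr rfl fun i _ => Finset.sum_congr rfl fun j _ => ?_
  congr 1
  simp [SimpleGraph.adj_comm]

lemma quad_bound {N : ℕ} (G : SimpleGraph (Fin N)) [DecidableRel G.Adj] {d : ℕ}
    (hreg : G.IsRegularOfDegree d) (x : Fin N → ℝ) :
    |x ⬝ᵥ (SimpleGraph.adjMatrix ℝ G).mulVec x| ≤ d * (x ⬝ᵥ x) := by
  rw [SimpleGraph.dotProduct_mulVec_adjMatrix]
  have habs : |∑ i, ∑ j, (if G.Adj i j then x i * x j else 0)|
      ≤ ∑ i, ∑ j, (if G.Adj i j then |x i * x j| else 0) := by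
    refine le_trans (Finset.abs_sum_le_sum_abs _ _) (Finset.sum_le_sum fun i _ => ?_)
    refine le_trans (Finset.abs_sum_le_sum_abs _ _) (Finset.sum_le_sum fun j _ => ?_)
    split_ifs <;> simp
  refine le_trans habs ?_
  have hle : ∑ i, ∑ j, (if G.Adj i j then |x i * x j| else 0)
      ≤ ∑ i, ∑ j, (if G.Adj i j then (x i ^ 2 / 2 + x j ^ 2 / 2) else 0) := by
    refine Finset.sum_le_sum fun i _ => Finset.sum_le_sum fun j _ => ?_
    split_ifs
    · rw [abs_mul]
      nlinarith [sq_nonneg (|x i| - |x j|), sq_abs (x i), sq_abs (x j)]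
    · exact le_refl _
  refine le_trans hle ?_
  have hsplit : ∑ i, ∑ j, (if G.Adj i j then (x i ^ 2 / 2 + x j ^ 2 / 2) else 0)
      = (∑ i, ∑ j, (if G.Adj i j then x i ^ 2 / 2 else 0))
        + ∑ i, ∑ j, (if G.Adj i j then x j ^ 2 / 2 else 0) := by
    rw [← Finset.sum_add_distrib]
    refine Finset.sum_congr rfl fun i _ => ?_
    rw [← Finset.sum_add_distrib]
    refine Finset.sum_congr rfl fun j _ => ?_
    split_ifs <;> ring
  rw [hsplit, row_ite_sq G hreg, col_ite_sq G hreg]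
  have : x ⬝ᵥ x = ∑ i, x i ^ 2 := by
    simp [dotProduct, sq]
  have h2 : ∑ i, x i ^ 2 / 2 = (∑ i, x i ^ 2) / 2 := by rw [Finset.sum_div]
  rw [this, h2]
  exact le_of_eq (by ring)

lemma pairs_le_two_mul_insideEdges {N : ℕ} (G : SimpleGraph (Fin N)) [DecidableRel G.Adj]
    (S : Finset (Fin N)) :
    ((S ×ˢ S).filter (fun p => G.Adj p.1 p.2)).card ≤ 2 * (insideEdges G S).card := by
  classical
  apply Finset.card_le_mul_card_image_of_maps_to
    (f := fun p : Fin N × Fin N => Sym2.mk p.1 p.2) (t := insideEdges G S)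
  · rintro ⟨a, b⟩ hab
    simp only [mem_filter, mem_product] at hab
    obtain ⟨⟨ha, hb⟩, hadj⟩ := hab
    simp only [insideEdges, mem_filter, SimpleGraph.mem_edgeFinset, SimpleGraph.mem_edgeSet]
    refine ⟨hadj, ?_⟩
    intro v hv
    rcases Sym2.mem_iff.mp hv with rfl | rfl <;> assumption
  · intro e he
    induction e with
    | _ a b =>
      have hsub : {p ∈ (S ×ˢ S).filter (fun p => G.Adj p.1 p.2) | Sym2.mk p.1 p.2 = s(a, b)}
          ⊆ {(a, b), (b, a)} := by
        rintro ⟨c, d⟩ hcd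
        simp only [mem_filter] at hcd
        have := hcd.2
        rw [Sym2.eq_iff] at this
        simp only [mem_insert, mem_singleton, Prod.mk.injEq]
        tauto
      calc _ ≤ ({(a, b), (b, a)} : Finset (Fin N × Fin N)).card := Finset.card_le_card hsub
        _ ≤ 2 := by
          apply le_trans (Finset.card_insert_le _ _); simp

lemma W_eq_double_sum {N : ℕ} (G : SimpleGraph (Fin N)) [DecidableRel G.Adj]
    (S : Finset (Fin N)) :
    ((((S ×ˢ S).filter (fun p => G.Adj p.1 p.2)).card : ℝ))
      = ∑ i, ∑ j, (if G.Adj i j then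
          (if i ∈ S then (1:ℝ) else 0) * (if j ∈ S then (1:ℝ) else 0) else 0) := by
  classical
  have h1 : (S ×ˢ S).filter (fun p => G.Adj p.1 p.2)
      = (Finset.univ ×ˢ Finset.univ).filter
          (fun p : Fin N × Fin N => G.Adj p.1 p.2 ∧ p.1 ∈ S ∧ p.2 ∈ S) := by
    ext ⟨a, b⟩
    simp only [mem_filter, mem_product, mem_univ, true_and]
    tauto
  rw [h1, Finset.card_filter, Finset.sum_product]
  push_cast
  refine Finset.sum_congr rfl fun i _ => Finset.sum_congr rfl fun j _ => ?_
  split_ifs <;> simp_all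

lemma sigma2_set_bddAbove {N : ℕ} (G : SimpleGraph (Fin N)) [DecidableRel G.Adj] {d : ℕ}
    (hd : 0 < d) (hreg : G.IsRegularOfDegree d) :
    ∀ r ∈ {r : ℝ | ∃ x : Fin N → ℝ, x ⬝ᵥ x = 1 ∧ (∑ i, x i) = 0 ∧
      r = |x ⬝ᵥ (normAdj G d).mulVec x|}, r ≤ 1 := by
  rintro r ⟨x, hxx, -, rfl⟩
  have h1 : (normAdj G d).mulVec x = (d : ℝ)⁻¹ • ((SimpleGraph.adjMatrix ℝ G).mulVec x) := by
    rw [normAdj, Matrix.smul_mulVec]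
  rw [h1, dotProduct_smul, smul_eq_mul, abs_mul, abs_inv, Nat.abs_cast]
  have hd' : (0:ℝ) < d := by exact_mod_cast hd
  have := quad_bound G hreg x
  rw [hxx, mul_one] at this
  calc ((d:ℝ))⁻¹ * |x ⬝ᵥ (SimpleGraph.adjMatrix ℝ G).mulVec x| ≤ (d:ℝ)⁻¹ * d := by
        apply mul_le_mul_of_nonneg_left this (by positivity)
    _ = 1 := by field_simp

lemma mixing {n d : ℕ} {ε : ℝ} (hε0 : 0 ≤ ε)
    (G : SimpleGraph (Fin (2 * n))) [DecidableRel G.Adj]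
    (hn : 0 < n) (hd : 0 < d)
    (hreg : G.IsRegularOfDegree d) (hexp : sigma2 G d ≤ ε)
    (S : Finset (Fin (2 * n))) :
    (d : ℝ) * S.card ^ 2 / (2 * n) - ε * d * S.card ≤
      2 * ((insideEdges G S).card : ℝ) := by
  classical
  have hN : (0:ℝ) < ((2 * n : ℕ) : ℝ) := by positivity
  have hNr : ((2 * n : ℕ) : ℝ) = 2 * (n:ℝ) := by push_cast; ring
  have hd' : (0:ℝ) < (d : ℝ) := by exact_mod_cast hd
  have hsN : S.card ≤ 2 * n := by
    simpa using Finset.card_le_card (Finset.subset_univ S)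
  have hW2 : ((((S ×ˢ S).filter (fun p => G.Adj p.1 p.2)).card : ℝ))
      ≤ 2 * ((insideEdges G S).card : ℝ) := by
    exact_mod_cast pairs_le_two_mul_insideEdges G S
  rw [← hNr]
  set s : ℕ := S.card with hs
  set W : ℝ := (((S ×ˢ S).filter (fun p => G.Adj p.1 p.2)).card : ℝ) with hWdef
  suffices key : (d : ℝ) * s ^ 2 / ((2*n:ℕ):ℝ) - ε * d * s ≤ W by linarith
  rcases Nat.eq_zero_or_pos s with hs0 | hspos
  · rw [hs0]
    have : (0:ℝ) ≤ W := by positivity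
    push_cast
    simpa using this
  rcases eq_or_lt_of_le hsN with hsN' | hslt
  · -- S = univ : W = d * N exactly
    have hSuniv : S = Finset.univ := by
      apply Finset.eq_univ_of_card; rw [← hs, hsN']; simp
    have hWval : W = (d:ℝ) * ((2*n:ℕ):ℝ) := by
      rw [hWdef, W_eq_double_sum]
      have : ∀ i j : Fin (2*n), (if G.Adj i j then
          (if i ∈ S then (1:ℝ) else 0) * (if j ∈ S then (1:ℝ) else 0) else 0)
          = (if G.Adj i j then (1:ℝ) else 0) := by
        intro i j; rw [hSuniv]; split_ifs <;> simp_all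
      simp only [this]
      rw [row_ite_sq G hreg (fun _ => (1:ℝ))]
      simp
    have hsr : (s:ℝ) = ((2*n:ℕ):ℝ) := by exact_mod_cast hsN'
    rw [hWval, ← hsr]
    have hs0' : (0:ℝ) < (s:ℝ) := by exact_mod_cast hspos
    have h1 : (d:ℝ) * (s:ℝ)^2 / (s:ℝ) = d * s := by field_simp [ne_of_gt hs0']
    rw [h1]
    nlinarith [mul_nonneg (mul_nonneg hε0 hd'.le) hs0'.le]
  · -- 0 < s < N
    set Nr : ℝ := ((2*n:ℕ):ℝ) with hNrdef
    set c : ℝ := s / Nr with hc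
    set x : Fin (2*n) → ℝ := fun i => (if i ∈ S then (1:ℝ) else 0) - c with hx
    have hind : ∑ i, (if i ∈ S then (1:ℝ) else 0) = s := by
      rw [Finset.sum_ite_mem, Finset.univ_inter, Finset.sum_const, ← hs]; simp
    have hone : ∑ _i : Fin (2*n), (1:ℝ) = Nr := by
      rw [Finset.sum_const, Finset.card_univ]; simp [hNrdef]
    have hNr0 : Nr ≠ 0 := ne_of_gt hN
    have hsum : ∑ i, x i = 0 := by
      simp only [hx, Finset.sum_sub_distrib, hind, Finset.sum_const, Finset.card_univ,
        Fintype.card_fin, nsmul_eq_mul, hc]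
      field_simp
      rw [hNr]; push_cast; ring
    have hxx : x ⬝ᵥ x = s - s^2 / Nr := by
      have h1 : x ⬝ᵥ x = ∑ i, ((if i ∈ S then (1:ℝ) else 0)
          - 2*c*(if i ∈ S then (1:ℝ) else 0) + c^2) := by
        rw [dotProduct]
        refine Finset.sum_congr rfl fun i _ => ?_
        simp only [hx]; split_ifs <;> ring
      rw [h1]
      simp only [Finset.sum_add_distrib, Finset.sum_sub_distrib, hind,
        ← Finset.mul_sum, Finset.sum_const, Finset.card_univ, Fintype.card_fin, nsmul_eq_mul]
      rw [hc]
      field_simp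
      rw [hNr]; push_cast; ring
    have hq : (0:ℝ) < s - s^2 / Nr := by
      have hs0' : (0:ℝ) < (s:ℝ) := by exact_mod_cast hspos
      have hslt' : (s:ℝ) < Nr := by rw [hNrdef]; exact_mod_cast hslt
      rw [sub_pos, sq]
      rw [div_lt_iff₀ hN]
      nlinarith
    set q : ℝ := s - s^2 / Nr with hqdef
    have hAx : x ⬝ᵥ (SimpleGraph.adjMatrix ℝ G).mulVec x = W - d * s^2 / Nr := by
      rw [SimpleGraph.dotProduct_mulVec_adjMatrix]
      have hterm : ∀ i j, (if G.Adj i j then x i * x j else 0)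
          = (if G.Adj i j then
              (if i ∈ S then (1:ℝ) else 0) * (if j ∈ S then (1:ℝ) else 0) else 0)
            - c * (if G.Adj i j then (if i ∈ S then (1:ℝ) else 0) else 0)
            - c * (if G.Adj i j then (if j ∈ S then (1:ℝ) else 0) else 0)
            + c^2 * (if G.Adj i j then (1:ℝ) else 0) := by
        intro i j
        simp only [hx]
        split_ifs <;> ring
      simp only [hterm]
      simp only [Finset.sum_add_distrib, Finset.sum_sub_distrib, ← Finset.mul_sum]
      rw [row_ite_sq G hreg (fun i => if i ∈ S then (1:ℝ) else 0),
        col_ite_sq G hreg (fun j => if j ∈ S then (1:ℝ) else 0),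
        row_ite_sq G hreg (fun _ => (1:ℝ)), hind, hone, ← W_eq_double_sum, ← hWdef]
      rw [hc]
      field_simp
      ring
    -- spectral bound
    have habs : |x ⬝ᵥ (normAdj G d).mulVec x| ≤ ε * q := by
      set y : Fin (2*n) → ℝ := (Real.sqrt q)⁻¹ • x with hy
      have hqs : Real.sqrt q > 0 := Real.sqrt_pos.mpr hq
      have hyy : y ⬝ᵥ y = 1 := by
        rw [hy, smul_dotProduct, dotProduct_smul, hxx]
        have hss : Real.sqrt q * Real.sqrt q = q := Real.mul_self_sqrt hq.le
        have hsne : Real.sqrt q ≠ 0 := ne_of_gt hqs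
        rw [smul_eq_mul, smul_eq_mul]
        field_simp
        rw [Real.sq_sqrt hq.le]
      have hysum : ∑ i, y i = 0 := by
        simp only [hy, Pi.smul_apply, smul_eq_mul, ← Finset.mul_sum, hsum, mul_zero]
      have hmem : |y ⬝ᵥ (normAdj G d).mulVec y| ∈ {r : ℝ | ∃ x : Fin (2*n) → ℝ,
          x ⬝ᵥ x = 1 ∧ (∑ i, x i) = 0 ∧ r = |x ⬝ᵥ (normAdj G d).mulVec x|} :=
        ⟨y, hyy, hysum, rfl⟩
      have hbdd : BddAbove {r : ℝ | ∃ x : Fin (2*n) → ℝ,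
          x ⬝ᵥ x = 1 ∧ (∑ i, x i) = 0 ∧ r = |x ⬝ᵥ (normAdj G d).mulVec x|} :=
        ⟨1, fun r hr => sigma2_set_bddAbove G hd hreg r hr⟩
      have hrle : |y ⬝ᵥ (normAdj G d).mulVec y| ≤ ε :=
        le_trans (le_csSup hbdd hmem) hexp
      have hyx : y ⬝ᵥ (normAdj G d).mulVec y = q⁻¹ * (x ⬝ᵥ (normAdj G d).mulVec x) := by
        rw [hy, Matrix.mulVec_smul, smul_dotProduct, dotProduct_smul]
        simp only [smul_eq_mul, ← mul_assoc]
        rw [← mul_inv, Real.mul_self_sqrt hq.le]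
      rw [hyx, abs_mul, abs_inv, abs_of_pos hq] at hrle
      have : |x ⬝ᵥ (normAdj G d).mulVec x| = q * (q⁻¹ * |x ⬝ᵥ (normAdj G d).mulVec x|) := by
        field_simp
      rw [this]
      calc q * (q⁻¹ * |x ⬝ᵥ (normAdj G d).mulVec x|) ≤ q * ε :=
            mul_le_mul_of_nonneg_left hrle hq.le
        _ = ε * q := mul_comm _ _
    -- translate to the adjacency matrix
    have hnorm : x ⬝ᵥ (normAdj G d).mulVec x
        = (d:ℝ)⁻¹ * (x ⬝ᵥ (SimpleGraph.adjMatrix ℝ G).mulVec x) := by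
      rw [normAdj, Matrix.smul_mulVec, dotProduct_smul, smul_eq_mul]
    rw [hnorm, abs_mul, abs_inv, Nat.abs_cast, hAx] at habs
    have habs' : |W - d * s^2 / Nr| ≤ ε * q * d := by
      rw [inv_mul_le_iff₀ hd'] at habs
      linarith [habs]
    have hqs' : q ≤ (s:ℝ) := by
      rw [hqdef]
      have : (0:ℝ) ≤ (s:ℝ)^2 / Nr := by positivity
      linarith
    have h1 : -(ε * d * s) ≤ W - d * s^2 / Nr := by
      have h2 : |W - d * s^2 / Nr| ≤ ε * d * s := by
        refine le_trans habs' ?_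
        have : ε * q * d ≤ ε * s * d :=
          mul_le_mul_of_nonneg_right (mul_le_mul_of_nonneg_left hqs' hε0) hd'.le
        linarith [this]
      linarith [neg_abs_le (W - d * s^2 / Nr), h2]
    linarith

open scoped Classical in
noncomputable def MSet {N : ℕ} (G : SimpleGraph (Fin N)) (i : ℕ) :
    Finset (Finset (Sym2 (Fin N))) :=
  univ.filter (fun M => IsMatchingSet G M ∧ M.card = i)

lemma numMatchings_eq {N : ℕ} (G : SimpleGraph (Fin N)) (i : ℕ) :
    numMatchings G i = (MSet G i).card := by
  classical
  rw [numMatchings, Nat.card_eq_fintype_card, Fintype.card_subtype, MSet]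

lemma MSet_zero {N : ℕ} (G : SimpleGraph (Fin N)) : MSet G 0 = {∅} := by
  classical
  ext M
  simp only [MSet, mem_filter, mem_univ, true_and, Finset.card_eq_zero, mem_singleton]
  constructor
  · rintro ⟨-, h⟩; exact h
  · rintro rfl
    refine ⟨⟨by simp, by simp⟩, rfl⟩

open scoped Classical in
open scoped Classical in
/-- The set of unmatched vertices. -/
noncomputable def unmatched {N : ℕ} (M : Finset (Sym2 (Fin N))) : Finset (Fin N) :=
  univ.filter (fun v => ∀ e ∈ M, v ∉ e)

lemma card_unmatched {N : ℕ} (G : SimpleGraph (Fin N)) (M : Finset (Sym2 (Fin N)))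
    (hM : IsMatchingSet G M) : (unmatched M).card = N - 2 * M.card := by
  classical
  have hcompl : unmatched M = univ \ M.biUnion (fun e => univ.filter (· ∈ e)) := by
    ext v
    simp only [unmatched, mem_filter, mem_univ, true_and, mem_sdiff, mem_biUnion, not_exists]
    tauto
  rw [hcompl, Finset.card_sdiff_of_subset (Finset.subset_univ _), Finset.card_univ, Fintype.card_fin]
  congr 1
  rw [Finset.card_biUnion]
  · have h2 : ∀ e ∈ M, (univ.filter (· ∈ e)).card = 2 := by
      intro e he
      have hedge : e ∈ G.edgeSet := hM.1 he
      induction e with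
      | _ a b =>
        have hab : a ≠ b := ((SimpleGraph.mem_edgeSet G).mp hedge).ne
        have : (univ.filter (· ∈ s(a,b))) = {a, b} := by
          ext v; simp [Sym2.mem_iff]
        rw [this, Finset.card_insert_of_notMem (by simpa using hab), Finset.card_singleton]
    rw [Finset.sum_congr rfl h2, Finset.sum_const, smul_eq_mul, mul_comm]
  · intro e he f hf hef
    simp only [Finset.disjoint_left, mem_filter, mem_univ, true_and]
    intro v hv hvf
    exact hM.2 e he f hf hef v hv hvf

lemma insideEdges_card_le_ext {N : ℕ} (G : SimpleGraph (Fin N)) [DecidableRel G.Adj]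
    (M : Finset (Sym2 (Fin N))) (hM : IsMatchingSet G M) :
    (insideEdges G (unmatched M)).card ≤
      ((MSet G (M.card + 1)).filter (fun M' => M ⊆ M')).card := by
  classical
  apply Finset.card_le_card_of_injOn (fun e => insert e M)
  · intro e he
    simp only [insideEdges, mem_coe, mem_filter, SimpleGraph.mem_edgeFinset] at he
    obtain ⟨heG, hein⟩ := he
    have hnotmem : e ∉ M := by
      obtain ⟨a, b⟩ := e
      have ha : a ∈ s(a, b) := by simp
      have haS := hein a ha
      simp only [unmatched, mem_filter, mem_univ, true_and] at haS
      intro hmem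
      exact haS _ hmem ha
    have hdisj : ∀ v : Fin N, v ∈ e → ∀ f ∈ M, v ∉ f := by
      intro v hv f hf
      have := hein v hv
      simp only [unmatched, mem_filter, mem_univ, true_and] at this
      exact this f hf
    simp only [MSet, mem_coe, mem_filter, mem_univ, true_and]
    refine ⟨⟨⟨?_, ?_⟩, ?_⟩, Finset.subset_insert _ _⟩
    · intro f hf
      simp only [Finset.coe_insert, Set.mem_insert_iff] at hf
      rcases hf with rfl | hf
      · exact heG
      · exact hM.1 hf
    · intro f hf g hg hfg v hvf
      rcases Finset.mem_insert.mp hf with rfl | hf'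
      · rcases Finset.mem_insert.mp hg with rfl | hg'
        · exact absurd rfl hfg
        · exact hdisj v hvf g hg'
      · rcases Finset.mem_insert.mp hg with rfl | hg'
        · intro hvg; exact hdisj v hvg f hf' hvf
        · exact hM.2 f hf' g hg' hfg v hvf
    · rw [Finset.card_insert_of_notMem hnotmem]
  · intro e he e' he' heq
    simp only [insideEdges, mem_coe, mem_filter, SimpleGraph.mem_edgeFinset] at he he'
    have hnot : e ∉ M := by
      obtain ⟨a, b⟩ := e
      have ha : a ∈ s(a, b) := by simp
      have := he.2 a ha
      simp only [unmatched, mem_filter, mem_univ, true_and] at this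
      intro hmem; exact this _ hmem ha
    have hnot' : e' ∉ M := by
      obtain ⟨a, b⟩ := e'
      have ha : a ∈ s(a, b) := by simp
      have := he'.2 a ha
      simp only [unmatched, mem_filter, mem_univ, true_and] at this
      intro hmem; exact this _ hmem ha
    replace heq : insert e M = insert e' M := heq
    have : e ∈ insert e' M := by rw [← heq]; exact Finset.mem_insert_self e M
    rcases Finset.mem_insert.mp this with h | h
    · exact h
    · exact absurd h hnot

open scoped Classical in
lemma step_count {N : ℕ} (G : SimpleGraph (Fin N)) [DecidableRel G.Adj] (i c : ℕ)
    (hc : ∀ M ∈ MSet G i, c ≤ ((MSet G (i + 1)).filter (fun M' => M ⊆ M')).card) :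
    (MSet G i).card * c ≤ (MSet G (i + 1)).card * (i + 1) := by
  apply Finset.card_mul_le_card_mul (fun M M' => M ⊆ M')
  · intro M hM
    rw [Finset.bipartiteAbove]
    exact hc M hM
  · intro M' hM'
    rw [Finset.bipartiteBelow]
    have hM'card : M'.card = i + 1 := by
      simp only [MSet, mem_filter] at hM'; exact hM'.2.2
    calc ((MSet G i).filter (fun M => M ⊆ M')).card
        ≤ (M'.powersetCard i).card := by
          apply Finset.card_le_card
          intro M hM
          simp only [mem_filter, MSet, mem_univ, true_and] at hM
          exact Finset.mem_powersetCard.mpr ⟨hM.2, hM.1.2⟩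
      _ = (i + 1).choose i := by rw [Finset.card_powersetCard, hM'card]
      _ = i + 1 := Nat.choose_succ_self_right i

lemma nat_pow_le_exp_factorial (n : ℕ) :
    (n : ℝ) ^ n ≤ Real.exp 1 ^ n * (n.factorial : ℝ) := by
  have h := Real.pow_div_factorial_le_exp (x := (n : ℝ)) (by positivity) n
  have hf : (0:ℝ) < (n.factorial : ℝ) := by exact_mod_cast n.factorial_pos
  rw [div_le_iff₀ hf] at h
  calc (n:ℝ)^n ≤ Real.exp n * n.factorial := h
    _ = Real.exp 1 ^ n * n.factorial := by
        rw [← Real.exp_nat_mul]; norm_num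

lemma final_numeric (n k d : ℕ) (ε : ℝ) (hn : 1 ≤ n) (hkn : k ≤ n)
    (hm : ((n - k : ℕ) : ℝ) = ε * n) (hε0 : 0 ≤ ε) :
    ((d : ℝ) / Real.exp 1) ^ k * Real.exp (-(2 * ε * n)) ≤
      ((d : ℝ) / n) ^ k * (n.descFactorial k : ℝ) := by
  set m : ℕ := n - k with hmdef
  have hE : (1:ℝ) < Real.exp 1 := by
    have := Real.exp_one_gt_d9; linarith
  have hE0 : (0:ℝ) < Real.exp 1 := by linarith
  have hn0 : (0:ℝ) < (n:ℝ) := by exact_mod_cast hn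
  have hD : (0:ℝ) < (n.descFactorial k : ℝ) := by
    have : n.descFactorial k ≠ 0 := by
      intro h0
      exact absurd (Nat.descFactorial_eq_zero_iff_lt.mp h0) (not_lt.mpr hkn)
    exact_mod_cast Nat.pos_of_ne_zero this
  -- rewrite the exponential
  have hexp : Real.exp (-(2 * ε * n)) = (Real.exp 1 ^ (2 * m))⁻¹ := by
    rw [← Real.exp_nat_mul, ← Real.exp_neg]
    congr 1
    push_cast
    rw [hm]
    ring
  -- main inequality
  have hkey : (n:ℝ) ^ k ≤ Real.exp 1 ^ (k + 2 * m) * (n.descFactorial k : ℝ) := by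
    have hsplit : n = k + m := by omega
    have hfac : ((n - k).factorial : ℝ) * (n.descFactorial k : ℝ) = (n.factorial : ℝ) := by
      exact_mod_cast congrArg (Nat.cast (R := ℝ)) (Nat.factorial_mul_descFactorial hkn)
    have h1 : (n:ℝ) ^ n ≤ Real.exp 1 ^ n * ((m.factorial : ℝ) * (n.descFactorial k : ℝ)) := by
      rw [hmdef, hfac]
      exact nat_pow_le_exp_factorial n
    have h2 : (m.factorial : ℝ) ≤ (m:ℝ) ^ m := by exact_mod_cast Nat.factorial_le_pow m
    have h3 : ((m:ℝ)) ^ m ≤ (n:ℝ) ^ m := by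
      apply pow_le_pow_left₀ (by positivity)
      exact_mod_cast Nat.sub_le n k
    have h4 : (n:ℝ) ^ n = (n:ℝ) ^ k * (n:ℝ) ^ m := by
      rw [hsplit, pow_add]
    have h5 : (n:ℝ) ^ k * (n:ℝ) ^ m ≤ Real.exp 1 ^ n * ((n:ℝ) ^ m * (n.descFactorial k : ℝ)) := by
      calc (n:ℝ) ^ k * (n:ℝ) ^ m ≤ Real.exp 1 ^ n * ((m.factorial : ℝ) * (n.descFactorial k : ℝ)) := by
            rw [← h4]; exact h1
        _ ≤ Real.exp 1 ^ n * ((n:ℝ) ^ m * (n.descFactorial k : ℝ)) := by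
            apply mul_le_mul_of_nonneg_left _ (by positivity)
            exact mul_le_mul_of_nonneg_right (h2.trans h3) hD.le
    have h6 : (n:ℝ) ^ k ≤ Real.exp 1 ^ n * (n.descFactorial k : ℝ) := by
      have hnm : (0:ℝ) < (n:ℝ) ^ m := by positivity
      have := h5
      rw [h4] at h1
      nlinarith [h5, hnm]
    calc (n:ℝ) ^ k ≤ Real.exp 1 ^ n * (n.descFactorial k : ℝ) := h6
      _ ≤ Real.exp 1 ^ (k + 2 * m) * (n.descFactorial k : ℝ) := by
          apply mul_le_mul_of_nonneg_right _ hD.le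
          apply pow_le_pow_right₀ hE.le
          omega
  -- conclude
  rw [hexp, div_pow, div_pow, ← div_eq_mul_inv, div_mul_eq_mul_div, div_div,
    div_le_div_iff₀ (by positivity) (by positivity)]
  calc (d:ℝ) ^ k * (n:ℝ) ^ k
      ≤ (d:ℝ) ^ k * (Real.exp 1 ^ (k + 2 * m) * (n.descFactorial k : ℝ)) :=
        mul_le_mul_of_nonneg_left hkey (by positivity)
    _ = (d:ℝ) ^ k * (n.descFactorial k : ℝ) * (Real.exp 1 ^ k * Real.exp 1 ^ (2 * m)) := by
        rw [pow_add]; ring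

end Auxiliary

/-- A `d`-regular `ε`-spectral expander on `2n` vertices (with `0 < ε < 1/2`) has at least
`(d/e)^{(1−ε)n} · e^{−2εn}` many `(1−ε)n`-matchings (assuming `(1−ε)n` is a nonnegative
integer `k`). -/
theorem many_near_perfect_matchings (n d k : ℕ)
    (ε : ℝ) (hε0 : 0 < ε) (hε : ε < 1 / 2)
    (G : SimpleGraph (Fin (2 * n))) [DecidableRel G.Adj]
    (hreg : G.IsRegularOfDegree d) (hexp : sigma2 G d ≤ ε)
    (hk : (k : ℝ) = (1 - ε) * n) :
    ((d : ℝ) / Real.exp 1) ^ ((1 - ε) * (n : ℝ)) * Real.exp (-(2 * ε * n)) ≤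
      (numMatchings G k : ℝ) := by
  classical
  -- trivial case n = 0
  rcases Nat.eq_zero_or_pos n with hn0 | hn
  · subst hn0
    have hk0 : k = 0 := by
      have : (k:ℝ) = 0 := by rw [hk]; simp
      exact_mod_cast this
    subst hk0
    rw [numMatchings_eq, MSet_zero]
    simp
  -- rewrite the real exponent as the natural number k
  have hrpow : ((d : ℝ) / Real.exp 1) ^ ((1 - ε) * (n : ℝ))
      = ((d : ℝ) / Real.exp 1) ^ (k : ℕ) := by
    rw [← hk, Real.rpow_natCast]
  rw [hrpow]
  -- trivial case d = 0
  rcases Nat.eq_zero_or_pos d with hd0 | hd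
  · subst hd0
    have hkpos : 0 < k := by
      have : (0:ℝ) < (k:ℝ) := by
        rw [hk]
        have : (0:ℝ) < (n:ℝ) := by exact_mod_cast hn
        nlinarith
      exact_mod_cast this
    have : ((0:ℕ):ℝ) / Real.exp 1 = 0 := by simp
    rw [this, zero_pow (by omega : k ≠ 0), zero_mul]
    positivity
  -- main case
  have hε0' : (0:ℝ) ≤ ε := le_of_lt hε0
  have hn0' : (0:ℝ) < (n:ℝ) := by exact_mod_cast hn
  have hkn : k ≤ n := by
    have : (k:ℝ) ≤ (n:ℝ) := by rw [hk]; nlinarith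
    exact_mod_cast this
  have hm : ((n - k : ℕ) : ℝ) = ε * n := by
    rw [Nat.cast_sub hkn, hk]; ring
  have hen : ε * (n:ℝ) = (n:ℝ) - (k:ℝ) := by
    rw [← hm, Nat.cast_sub hkn]
  -- the greedy lower bounds
  set B : ℕ → ℝ := fun i => (d:ℝ) / n * (((n:ℝ) - i) * ((k:ℝ) - i)) with hB
  have hBnn : ∀ i < k, 0 ≤ B i := by
    intro i hi
    have h1 : (i:ℝ) ≤ (k:ℝ) := by exact_mod_cast hi.le
    have h2 : (k:ℝ) ≤ (n:ℝ) := by exact_mod_cast hkn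
    have : (0:ℝ) ≤ (n:ℝ) - i := by linarith
    have : (0:ℝ) ≤ (k:ℝ) - i := by linarith
    rw [hB]
    positivity
  have step_real : ∀ i < k,
      ((MSet G i).card : ℝ) * B i ≤ ((MSet G (i+1)).card : ℝ) * ((i:ℝ) + 1) := by
    intro i hi
    have hik : i < n := lt_of_lt_of_le hi hkn
    have hc : ∀ M ∈ MSet G i,
        ⌈B i⌉₊ ≤ ((MSet G (i + 1)).filter (fun M' => M ⊆ M')).card := by
      intro M hM
      simp only [MSet, mem_filter, mem_univ, true_and] at hM
      obtain ⟨hMmatch, hMcard⟩ := hM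
      have hScard : (unmatched M).card = 2 * n - 2 * i := by
        rw [card_unmatched G M hMmatch, hMcard]
      have hScardR : ((unmatched M).card : ℝ) = 2 * ((n:ℝ) - i) := by
        rw [hScard, Nat.cast_sub (by omega)]
        push_cast; ring
      have hmix := mixing hε0' G hn hd hreg hexp (unmatched M)
      rw [hScardR] at hmix
      have hεval : ε = ((n:ℝ) - k) / n := by
        rw [eq_div_iff (ne_of_gt hn0')]; linarith [hen]
      have heq : (d:ℝ) * (2 * ((n:ℝ) - i)) ^ 2 / (2 * n) - ε * d * (2 * ((n:ℝ) - i))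
          = 2 * B i := by
        rw [hB, hεval]
        field_simp
        ring
      rw [heq] at hmix
      have hBle : B i ≤ ((insideEdges G (unmatched M)).card : ℝ) := by linarith
      have h1 : ⌈B i⌉₊ ≤ (insideEdges G (unmatched M)).card := Nat.ceil_le.mpr hBle
      refine le_trans h1 ?_
      have := insideEdges_card_le_ext G M hMmatch
      rwa [hMcard] at this
    have hnat := step_count G i ⌈B i⌉₊ hc
    have hcast : ((MSet G i).card : ℝ) * (⌈B i⌉₊ : ℝ)
        ≤ ((MSet G (i+1)).card : ℝ) * ((i:ℝ) + 1) := by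
      have := hnat
      push_cast
      exact_mod_cast hnat
    calc ((MSet G i).card : ℝ) * B i ≤ ((MSet G i).card : ℝ) * (⌈B i⌉₊ : ℝ) :=
          mul_le_mul_of_nonneg_left (Nat.le_ceil _) (by positivity)
      _ ≤ ((MSet G (i+1)).card : ℝ) * ((i:ℝ) + 1) := hcast
  -- induction: product bound
  have prod_le : ∀ i, i ≤ k →
      ∏ j ∈ range i, B j ≤ ((MSet G i).card : ℝ) * (i.factorial : ℝ) := by
    intro i
    induction i with
    | zero =>
      intro _
      rw [MSet_zero]
      simp
    | succ i ih =>
      intro hik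
      have hi : i < k := hik
      have hih := ih (le_of_lt hi)
      rw [Finset.prod_range_succ]
      calc (∏ j ∈ range i, B j) * B i
          ≤ (((MSet G i).card : ℝ) * (i.factorial : ℝ)) * B i :=
            mul_le_mul_of_nonneg_right hih (hBnn i hi)
        _ = (((MSet G i).card : ℝ) * B i) * (i.factorial : ℝ) := by ring
        _ ≤ (((MSet G (i+1)).card : ℝ) * ((i:ℝ) + 1)) * (i.factorial : ℝ) :=
            mul_le_mul_of_nonneg_right (step_real i hi) (by positivity)
        _ = ((MSet G (i+1)).card : ℝ) * ((i+1).factorial : ℝ) := by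
            rw [Nat.factorial_succ]
            push_cast
            ring
  -- evaluate the product
  have prod_eval : ∏ j ∈ range k, B j
      = ((d:ℝ) / n) ^ k * (n.descFactorial k : ℝ) * (k.factorial : ℝ) := by
    have h1 : ∀ j ∈ range k, B j = (d:ℝ)/n * (((n:ℝ) - j) * ((k:ℝ) - j)) := fun j _ => rfl
    have hp1 : ∏ j ∈ range k, ((n:ℝ) - j) = (n.descFactorial k : ℝ) := by
      rw [Nat.descFactorial_eq_prod_range, Nat.cast_prod]
      refine Finset.prod_congr rfl fun j hj => ?_
      exact (Nat.cast_sub (le_trans (le_of_lt (mem_range.mp hj)) hkn)).symm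
    have hp2 : ∏ j ∈ range k, ((k:ℝ) - j) = (k.factorial : ℝ) := by
      rw [← Nat.descFactorial_self, Nat.descFactorial_eq_prod_range, Nat.cast_prod]
      refine Finset.prod_congr rfl fun j hj => ?_
      exact (Nat.cast_sub (le_of_lt (mem_range.mp hj))).symm
    rw [Finset.prod_congr rfl h1, Finset.prod_mul_distrib, Finset.prod_const,
      Finset.card_range, Finset.prod_mul_distrib, hp1, hp2]
    ring
  -- combine
  have hmain : ((d:ℝ) / n) ^ k * (n.descFactorial k : ℝ) ≤ ((MSet G k).card : ℝ) := by
    have h1 := prod_le k le_rfl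
    rw [prod_eval] at h1
    have hf : (0:ℝ) < (k.factorial : ℝ) := by exact_mod_cast k.factorial_pos
    calc ((d:ℝ) / n) ^ k * (n.descFactorial k : ℝ)
        = ((d:ℝ) / n) ^ k * (n.descFactorial k : ℝ) * (k.factorial : ℝ) / (k.factorial : ℝ) := by
          field_simp
      _ ≤ ((MSet G k).card : ℝ) * (k.factorial : ℝ) / (k.factorial : ℝ) := by
          gcongr
      _ = ((MSet G k).card : ℝ) := by field_simp
  rw [numMatchings_eq]
  exact le_trans (final_numeric n k d ε hn hkn hm hε0') hmain
end
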